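/- Let D₀ be any linear subspace of ℝⁿ. For each p, q ∈ (0,∞)ⁿ there exists a unique x ∈ (0,∞)ⁿ such that x − p ∈ D₀ and ρ⃗(x) − ρ⃗(q) ∈ D₀^⊥ (the orthogonal complement of D₀). -/

import Mathlib

open MeasureTheory intervalIntegral Real Filter Topology Set RealInnerProductSpace

noncomputable def stmt8Phi (θ : ℝ → ℝ) : ℝ → ℝ := fun t => ∫ s in (0:ℝ)..t, Real.log (θ s)

section oneD
variable {θ : ℝ → ℝ}

lemma stmt8_pos (hθ0 : θ 0 = 0) (hθmono : StrictMonoOn θ (Set.Ici (0:ℝ))) :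
    ∀ t : ℝ, 0 < t → 0 < θ t := by
  intro t ht
  have := hθmono (le_refl (0:ℝ) : (0:ℝ) ∈ Ici (0:ℝ)) (le_of_lt ht : t ∈ Ici (0:ℝ)) ht
  simpa [hθ0] using this

lemma stmt8_fint (hθlip : LocallyLipschitz θ) (hθ0 : θ 0 = 0)
    (hθmono : StrictMonoOn θ (Set.Ici (0:ℝ)))
    (hθint : MeasureTheory.IntegrableOn (fun y => |Real.log (θ y)|) (Set.Ioc (0:ℝ) 1)) :
    ∀ t : ℝ, IntegrableOn (fun s => Real.log (θ s)) (Set.Ioc 0 t) := by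
  intro t
  have hmeas : Measurable fun s => Real.log (θ s) :=
    Real.measurable_log.comp hθlip.continuous.measurable
  have h01 : IntegrableOn (fun s => Real.log (θ s)) (Set.Ioc 0 1) := by
    refine hθint.mono' hmeas.aestronglyMeasurable ?_
    filter_upwards with s
    simp [Real.norm_eq_abs]
  rcases le_or_gt t 1 with h | h
  · exact h01.mono_set (Set.Ioc_subset_Ioc_right h)
  · have h1t : IntegrableOn (fun s => Real.log (θ s)) (Set.Ioc 1 t) := by
      have hc : ContinuousOn (fun s => Real.log (θ s)) (Set.Icc 1 t) := by
        intro s hs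
        have hs0 : 0 < θ s := stmt8_pos hθ0 hθmono s (lt_of_lt_of_le zero_lt_one hs.1)
        exact ((Real.continuousAt_log (ne_of_gt hs0)).comp
          hθlip.continuous.continuousAt).continuousWithinAt
      exact (hc.integrableOn_Icc).mono_set Set.Ioc_subset_Icc_self
    have : Set.Ioc (0:ℝ) t = Set.Ioc 0 1 ∪ Set.Ioc 1 t :=
      (Set.Ioc_union_Ioc_eq_Ioc zero_le_one h.le).symm
    rw [this]
    exact h01.union h1t

lemma stmt8_fII (hfint : ∀ t : ℝ, IntegrableOn (fun s => Real.log (θ s)) (Set.Ioc 0 t)) :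
    ∀ t : ℝ, 0 ≤ t → IntervalIntegrable (fun s => Real.log (θ s)) volume 0 t := by
  intro t ht
  rw [intervalIntegrable_iff_integrableOn_Ioc_of_le ht]
  exact hfint t

lemma stmt8_Phicont (hfint : ∀ t : ℝ, IntegrableOn (fun s => Real.log (θ s)) (Set.Ioc 0 t)) :
    ContinuousOn (stmt8Phi θ) (Set.Ici (0:ℝ)) := by
  intro x hx
  have hb : (0:ℝ) ≤ x + 1 := by linarith [mem_Ici.mp hx]
  have h1 : ContinuousOn (stmt8Phi θ) (Set.uIcc (0:ℝ) (x+1)) :=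
    continuousOn_primitive_interval' (stmt8_fII hfint _ hb) left_mem_uIcc
  have huIcc : Set.uIcc (0:ℝ) (x+1) = Set.Icc 0 (x+1) := uIcc_of_le hb
  rw [huIcc] at h1
  have hxmem : x ∈ Set.Icc (0:ℝ) (x+1) := ⟨hx, by linarith⟩
  refine (h1 x hxmem).mono_of_mem_nhdsWithin ?_
  have : Set.Icc (0:ℝ) (x+1) = Set.Ici 0 ∩ Set.Iic (x+1) := (Set.Ici_inter_Iic).symm
  rw [this]
  exact inter_mem_nhdsWithin _ (Iic_mem_nhds (by linarith))

lemma stmt8_Phideriv (hθlip : LocallyLipschitz θ) (hθ0 : θ 0 = 0)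
    (hθmono : StrictMonoOn θ (Set.Ici (0:ℝ)))
    (hfint : ∀ t : ℝ, IntegrableOn (fun s => Real.log (θ s)) (Set.Ioc 0 t)) :
    ∀ b : ℝ, 0 < b → HasDerivAt (stmt8Phi θ) (Real.log (θ b)) b := by
  intro b hb
  have hθb : 0 < θ b := stmt8_pos hθ0 hθmono b hb
  have hcont : ContinuousAt (fun s => Real.log (θ s)) b :=
    (Real.continuousAt_log (ne_of_gt hθb)).comp hθlip.continuous.continuousAt
  exact integral_hasDerivAt_right (stmt8_fII hfint b hb.le)
    (Real.measurable_log.comp hθlip.continuous.measurable).stronglyMeasurable.stronglyMeasurableAtFilter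
    hcont

lemma stmt8_Phile (hθ0 : θ 0 = 0)
    (hθmono : StrictMonoOn θ (Set.Ici (0:ℝ)))
    (hfint : ∀ t : ℝ, IntegrableOn (fun s => Real.log (θ s)) (Set.Ioc 0 t)) :
    ∀ a : ℝ, 0 < a → stmt8Phi θ a ≤ a * Real.log (θ a) := by
  intro a ha
  unfold stmt8Phi
  rw [intervalIntegral.integral_of_le ha.le]
  have hθa : 0 < θ a := stmt8_pos hθ0 hθmono a ha
  have hmono : ∀ s ∈ Set.Ioc (0:ℝ) a, Real.log (θ s) ≤ Real.log (θ a) := by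
    intro s hs
    exact Real.log_le_log (stmt8_pos hθ0 hθmono s hs.1)
      (hθmono.monotoneOn hs.1.le ha.le hs.2)
  calc (∫ s in Set.Ioc (0:ℝ) a, Real.log (θ s))
      ≤ ∫ _s in Set.Ioc (0:ℝ) a, Real.log (θ a) := by
        refine setIntegral_mono_on (hfint a) (integrableOn_const ?_) measurableSet_Ioc hmono
        simp [Real.volume_Ioc]
    _ = a * Real.log (θ a) := by
        simp [Real.volume_Ioc, ENNReal.toReal_ofReal ha.le, ha.le]

lemma stmt8_ftop (hθmono : StrictMonoOn θ (Set.Ici (0:ℝ)))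
    (hθonto : ∀ r : ℝ, 0 ≤ r → ∃ y : ℝ, 0 ≤ y ∧ θ y = r) :
    Tendsto (fun s => Real.log (θ s)) atTop atTop := by
  rw [tendsto_atTop]
  intro M
  obtain ⟨y, hy0, hy⟩ := hθonto (Real.exp M) (Real.exp_pos M).le
  rw [eventually_atTop]
  refine ⟨y, fun t ht => ?_⟩
  have hθt : Real.exp M ≤ θ t := by
    rw [← hy]; exact hθmono.monotoneOn hy0 (hy0.trans ht) ht
  calc M = Real.log (Real.exp M) := (Real.log_exp M).symm
    _ ≤ Real.log (θ t) := Real.log_le_log (Real.exp_pos M) hθt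

lemma stmt8_fbot (hθlip : LocallyLipschitz θ) (hθ0 : θ 0 = 0)
    (hθmono : StrictMonoOn θ (Set.Ici (0:ℝ))) :
    Tendsto (fun s => Real.log (θ s)) (𝓝[>] (0:ℝ)) atBot := by
  have h1 : Tendsto θ (𝓝[>] (0:ℝ)) (𝓝[>] (0:ℝ)) := by
    refine tendsto_nhdsWithin_of_tendsto_nhds_of_eventually_within _ ?_ ?_
    · have := hθlip.continuous.continuousAt (x := (0:ℝ))
      rw [ContinuousAt, hθ0] at this
      exact this.mono_left nhdsWithin_le_nhds
    · filter_upwards [self_mem_nhdsWithin] with t ht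
      exact stmt8_pos hθ0 hθmono t ht
  exact Real.tendsto_log_nhdsGT_zero.comp h1

lemma stmt8_coercive (hfint : ∀ t : ℝ, IntegrableOn (fun s => Real.log (θ s)) (Set.Ioc 0 t))
    (hftop : Tendsto (fun s => Real.log (θ s)) atTop atTop) (c : ℝ) :
    Tendsto (fun t => stmt8Phi θ t - c * t) atTop atTop := by
  obtain ⟨T, hT⟩ := eventually_atTop.mp (tendsto_atTop.mp hftop (c+1))
  set T' := max T 1 with hT'
  have hT'1 : (1:ℝ) ≤ T' := le_max_right _ _
  have hT'0 : (0:ℝ) ≤ T' := zero_le_one.trans hT'1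
  have key : ∀ t : ℝ, T' ≤ t →
      t + (stmt8Phi θ T' - (c+1) * T') ≤ stmt8Phi θ t - c * t := by
    intro t ht
    have htpos : (0:ℝ) ≤ t := hT'0.trans ht
    have hIIseg : IntervalIntegrable (fun s => Real.log (θ s)) volume T' t :=
      (stmt8_fII hfint t htpos).mono_set
        (by rw [Set.uIcc_of_le ht, Set.uIcc_of_le htpos]; exact Set.Icc_subset_Icc hT'0 le_rfl)
    have hsplit : stmt8Phi θ t = stmt8Phi θ T' + ∫ s in T'..t, Real.log (θ s) :=
      (intervalIntegral.integral_add_adjacent_intervals (stmt8_fII hfint T' hT'0) hIIseg).symm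
    have hlow : (t - T') * (c+1) ≤ ∫ s in T'..t, Real.log (θ s) := by
      have h2 := intervalIntegral.integral_mono_on ht
        (_root_.intervalIntegrable_const (c := c+1)) hIIseg
        (fun x hx => hT x ((le_max_left T 1).trans hx.1))
      simp only [intervalIntegral.integral_const, smul_eq_mul] at h2
      linarith
    rw [hsplit]
    nlinarith
  have hlin : Tendsto (fun t : ℝ => t + (stmt8Phi θ T' - (c+1) * T')) atTop atTop :=
    tendsto_atTop_add_const_right atTop _ tendsto_id
  refine tendsto_atTop_mono' atTop ?_ hlin
  filter_upwards [eventually_ge_atTop T'] with t ht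
  exact key t ht

lemma stmt8_bdd (hfint : ∀ t : ℝ, IntegrableOn (fun s => Real.log (θ s)) (Set.Ioc 0 t))
    (hftop : Tendsto (fun s => Real.log (θ s)) atTop atTop) (c : ℝ) :
    ∃ B : ℝ, ∀ t : ℝ, 0 ≤ t → B ≤ stmt8Phi θ t - c * t := by
  obtain ⟨T, hT⟩ := eventually_atTop.mp (tendsto_atTop.mp (stmt8_coercive hfint hftop c) 0)
  set T' := max T 0 with hT'def
  have hT'0 : (0:ℝ) ≤ T' := le_max_right _ _
  have hcont : ContinuousOn (fun t => stmt8Phi θ t - c * t) (Set.Icc 0 T') :=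
    (((stmt8_Phicont hfint).mono (Set.Icc_subset_Ici_self)).sub
      (continuousOn_const.mul continuousOn_id))
  obtain ⟨m, _, hm⟩ := isCompact_Icc.exists_isMinOn ⟨0, le_rfl, hT'0⟩ hcont
  refine ⟨min (stmt8Phi θ m - c * m) 0, fun t ht => ?_⟩
  rcases le_or_gt t T' with h | h
  · exact (min_le_left _ _).trans (hm ⟨ht, h⟩)
  · exact (min_le_right _ _).trans (hT t ((le_max_left T 0).trans h.le))

end oneD

theorem stmt_8
    (n : ℕ) (hn : 0 < n)
    (θ : ℝ → ℝ)
    (hθlip : LocallyLipschitz θ)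
    (hθ0 : θ 0 = 0)
    (hθnn : ∀ y : ℝ, 0 ≤ θ y)
    (hθmono : StrictMonoOn θ (Set.Ici (0:ℝ)))
    (hθonto : ∀ r : ℝ, 0 ≤ r → ∃ y : ℝ, 0 ≤ y ∧ θ y = r)
    (hθint : MeasureTheory.IntegrableOn (fun y => |Real.log (θ y)|) (Set.Ioc (0:ℝ) 1))
    (D₀ : Submodule ℝ (EuclideanSpace ℝ (Fin n)))
    :
    ∀ p q : EuclideanSpace ℝ (Fin n), (∀ k, 0 < p k) → (∀ k, 0 < q k) →
      ∃! x : EuclideanSpace ℝ (Fin n), (∀ k, 0 < x k) ∧ x - p ∈ D₀ ∧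
        ((WithLp.toLp 2 (fun k => Real.log (θ (x k)) - Real.log (θ (q k))) : EuclideanSpace ℝ (Fin n)) ∈ D₀ᗮ) := by
  intro p q hp hq
  have hfint := stmt8_fint hθlip hθ0 hθmono hθint
  have hPhicont := stmt8_Phicont (θ := θ) hfint
  have hPhideriv := stmt8_Phideriv hθlip hθ0 hθmono hfint
  have hPhile := stmt8_Phile hθ0 hθmono hfint
  have hftop := stmt8_ftop hθmono hθonto
  have hfbot := stmt8_fbot hθlip hθ0 hθmono
  have hco := stmt8_coercive (θ := θ) hfint hftop
  have hbdd := stmt8_bdd (θ := θ) hfint hftop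
  set Φ : ℝ → ℝ := stmt8Phi θ with hΦdef
  set c : Fin n → ℝ := fun k => Real.log (θ (q k)) with hcdef
  set F : EuclideanSpace ℝ (Fin n) → ℝ := fun x => ∑ k, (Φ (x k) - c k * x k) with hFdef
  set C : Set (EuclideanSpace ℝ (Fin n)) := {x | (∀ k, 0 ≤ x k) ∧ x - p ∈ D₀} with hCdef
  have hpC : p ∈ C := ⟨fun k => (hp k).le, by simp⟩
  have hFcont : ContinuousOn F {x : EuclideanSpace ℝ (Fin n) | ∀ k, 0 ≤ x k} := by
    rw [hFdef]
    apply continuousOn_finset_sum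
    intro k _
    refine ContinuousOn.sub ?_ ((continuous_const.mul (PiLp.continuous_apply 2 _ k)).continuousOn)
    exact hPhicont.comp (PiLp.continuous_apply 2 _ k).continuousOn (fun x hx => hx k)
  have hCsub : C ⊆ {x : EuclideanSpace ℝ (Fin n) | ∀ k, 0 ≤ x k} := fun x hx => hx.1
  have hCclosed : IsClosed C := by
    have h1 : IsClosed {x : EuclideanSpace ℝ (Fin n) | ∀ k, 0 ≤ x k} := by
      have : {x : EuclideanSpace ℝ (Fin n) | ∀ k, 0 ≤ x k}
          = ⋂ k, (fun x : EuclideanSpace ℝ (Fin n) => x k) ⁻¹' (Set.Ici 0) := by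
        ext x; simp [Set.mem_iInter]
      rw [this]
      exact isClosed_iInter fun k => (isClosed_Ici).preimage (PiLp.continuous_apply 2 _ k)
    have h2 : IsClosed ((fun x : EuclideanSpace ℝ (Fin n) => x - p) ⁻¹' (D₀ : Set _)) :=
      (Submodule.closed_of_finiteDimensional D₀).preimage (continuous_id.sub continuous_const)
    exact h1.inter h2
  -- existence of a minimizer of F over C
  obtain ⟨x, hxC, hxmin⟩ : ∃ x ∈ C, ∀ y ∈ C, F x ≤ F y := by
    classical
    choose B hB using fun k => hbdd (c k)
    set S : Set (EuclideanSpace ℝ (Fin n)) := C ∩ {x | F x ≤ F p} with hSdef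
    have hpS : p ∈ S := ⟨hpC, by simp only [Set.mem_setOf_eq]; exact le_rfl⟩
    have hSbound : ∀ x ∈ S, ∀ k, Φ (x k) - c k * x k ≤ F p - ∑ j, B j + B k := by
      intro x hxS k
      have h2 : ∑ j ∈ Finset.univ.erase k, B j ≤ ∑ j ∈ Finset.univ.erase k, (Φ (x j) - c j * x j) :=
        Finset.sum_le_sum (fun j _ => hB j (x j) (hxS.1.1 j))
      have h3 : (Φ (x k) - c k * x k) + ∑ j ∈ Finset.univ.erase k, (Φ (x j) - c j * x j) = F x := by
        simp only [hFdef]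
        exact Finset.add_sum_erase Finset.univ (fun j => Φ (x j) - c j * x j) (Finset.mem_univ k)
      have h4 : ∑ j ∈ Finset.univ.erase k, B j = ∑ j, B j - B k :=
        Finset.sum_erase_eq_sub (Finset.mem_univ k)
      have h5 : F x ≤ F p := hxS.2
      linarith
    have hTex : ∀ k : Fin n, ∃ T, ∀ t, T ≤ t → F p - ∑ j, B j + B k < Φ t - c k * t := by
      intro k
      obtain ⟨T, hT⟩ := eventually_atTop.mp
        (tendsto_atTop.mp (hco (c k)) (F p - ∑ j, B j + B k + 1))
      exact ⟨T, fun t ht => by linarith [hT t ht]⟩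
    choose T hT using hTex
    have hxlt : ∀ x ∈ S, ∀ k, x k < T k := by
      intro x hxS k
      by_contra h
      push_neg at h
      exact absurd (hSbound x hxS k) (not_le.mpr (hT k (x k) h))
    have hSbdd : Bornology.IsBounded S := by
      rw [isBounded_iff_forall_norm_le]
      refine ⟨Real.sqrt (∑ k, (T k)^2), fun x hxS => ?_⟩
      rw [EuclideanSpace.norm_eq]
      apply Real.sqrt_le_sqrt
      apply Finset.sum_le_sum
      intro k _
      have h1 := hxlt x hxS k
      have h2 := hxS.1.1 k
      rw [Real.norm_eq_abs, abs_of_nonneg h2]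
      nlinarith
    have hSclosed : IsClosed S := by
      have := (hFcont.mono hCsub).preimage_isClosed_of_isClosed hCclosed
        (isClosed_Iic (a := F p))
      exact this
    obtain ⟨x, hxS, hxmin⟩ := (Metric.isCompact_of_isClosed_isBounded hSclosed hSbdd).exists_isMinOn
      ⟨p, hpS⟩ (hFcont.mono (fun z hz => hCsub hz.1))
    refine ⟨x, hxS.1, fun y hy => ?_⟩
    rcases le_or_gt (F y) (F p) with h | h
    · exact hxmin ⟨hy, h⟩
    · exact le_trans (hxmin hpS) h.le
  -- positivity of the minimizer
  have hxpos : ∀ k, 0 < x k := by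
    classical
    by_contra hcon
    push_neg at hcon
    obtain ⟨k₀, hk₀le⟩ := hcon
    have hk₀ : x k₀ = 0 := le_antisymm hk₀le (hxC.1 k₀)
    set d : EuclideanSpace ℝ (Fin n) := p - x with hddef
    have hdk : ∀ k, d k = p k - x k := fun k => by simp [hddef]
    set sl : Fin n → ℝ → ℝ := fun k t => (Φ (x k + t * d k) - Φ (x k)) / t with hsldef
    set l : Filter ℝ := 𝓝[>] (0:ℝ) with hldef
    -- limit of slopes at positive coordinates
    have hP : ∀ k : Fin n, 0 < x k → Tendsto (sl k) l (𝓝 (Real.log (θ (x k)) * d k)) := by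
      intro k hk
      have hb : HasDerivAt (fun t : ℝ => x k + t * d k) (d k) 0 := by
        simpa using ((hasDerivAt_id (0:ℝ)).mul_const (d k)).const_add (x k)
      have hder : HasDerivAt (fun t => Φ (x k + t * d k)) (Real.log (θ (x k)) * d k) 0 := by
        have h2 := HasDerivAt.comp (0:ℝ)
          (show HasDerivAt Φ (Real.log (θ (x k))) ((fun t : ℝ => x k + t * d k) 0) by
            simpa using hPhideriv (x k) hk) hb
        exact h2
      have hts := (hasDerivAt_iff_tendsto_slope.mp hder).mono_left
        (nhdsWithin_mono _ (fun t (ht : t ∈ Set.Ioi (0:ℝ)) => ne_of_gt ht))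
      refine hts.congr' ?_
      filter_upwards [self_mem_nhdsWithin] with t ht
      simp [slope_def_field, hsldef]
    -- slopes at zero coordinates tend to -infinity
    have hZ : ∀ k : Fin n, x k = 0 → Tendsto (sl k) l atBot := by
      intro k hk
      have hdkp : d k = p k := by rw [hdk k, hk, sub_zero]
      have hmul : Tendsto (fun t : ℝ => t * p k) l (𝓝[>] (0:ℝ)) := by
        refine tendsto_nhdsWithin_of_tendsto_nhds_of_eventually_within _ ?_ ?_
        · have : Tendsto (fun t : ℝ => t * p k) (𝓝 0) (𝓝 (0 * p k)) :=
            (continuous_id.mul continuous_const).tendsto 0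
          rw [zero_mul] at this
          exact this.mono_left nhdsWithin_le_nhds
        · filter_upwards [self_mem_nhdsWithin] with t ht
          exact mul_pos ht (hp k)
      have hm : Tendsto (fun t : ℝ => p k * Real.log (θ (t * p k))) l atBot :=
        (hfbot.comp hmul).const_mul_atBot (hp k)
      refine tendsto_atBot_mono' l ?_ hm
      filter_upwards [self_mem_nhdsWithin] with t ht
      have harg : 0 < t * p k := mul_pos ht (hp k)
      have hle := hPhile (t * p k) harg
      have hΦ0 : Φ (0:ℝ) = 0 := by
        simp [hΦdef, stmt8Phi]
      rw [hsldef]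
      simp only [hdkp, hk, zero_add]
      rw [div_le_iff₀ ht, hΦ0, sub_zero]
      calc Φ (t * p k) ≤ t * p k * Real.log (θ (t * p k)) := hle
        _ = p k * Real.log (θ (t * p k)) * t := by ring
    -- combine
    set Pset : Finset (Fin n) := Finset.univ.filter (fun k => 0 < x k) with hPset
    set L : ℝ := ∑ k ∈ Pset, Real.log (θ (x k)) * d k with hLdef
    have hsumP : Tendsto (fun t => ∑ k ∈ Pset, sl k t) l (𝓝 L) := by
      apply tendsto_finset_sum
      intro k hk
      exact hP k (Finset.mem_filter.mp hk).2
    have hE1 : ∀ᶠ t in l, ∑ k ∈ Pset, sl k t ≤ L + 1 :=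
      hsumP.eventually_le_const (by linarith)
    have hE2 : ∀ᶠ t in l, ∀ k ∈ Finset.univ.filter (fun k => ¬ 0 < x k), sl k t ≤ 0 := by
      rw [eventually_all_finset]
      intro k hk
      have hk0 : x k = 0 := le_antisymm (not_lt.mp (Finset.mem_filter.mp hk).2) (hxC.1 k)
      exact (hZ k hk0).eventually_le_atBot 0
    have hE3 : ∀ᶠ t in l, sl k₀ t < (∑ k, c k * d k) - (L + 1) :=
      (hZ k₀ hk₀).eventually_lt_atBot _
    have hE4 : ∀ᶠ t in l, t < 1 :=
      eventually_nhdsWithin_of_eventually_nhds (eventually_lt_nhds zero_lt_one)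
    obtain ⟨t, ht1, ht0, hE1t, hE2t, hE3t⟩ :=
      (hE4.and ((eventually_mem_nhdsWithin (s := Set.Ioi (0:ℝ))).and
        (hE1.and (hE2.and hE3)))).exists
    have ht0' : (0:ℝ) < t := ht0
    -- bound the full sum of slopes
    have hk₀mem : k₀ ∈ Finset.univ.filter (fun k => ¬ 0 < x k) := by
      simp [hk₀]
    have hZsum : ∑ k ∈ Finset.univ.filter (fun k => ¬ 0 < x k), sl k t ≤ sl k₀ t := by
      have herase : ∑ k ∈ (Finset.univ.filter (fun k => ¬ 0 < x k)).erase k₀, sl k t ≤ 0 :=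
        Finset.sum_nonpos (fun k hk => hE2t k (Finset.mem_of_mem_erase hk))
      have := Finset.add_sum_erase _ (fun k => sl k t) hk₀mem
      linarith [this.symm]
    have hsplit : ∑ k ∈ Finset.univ.filter (fun k => 0 < x k), sl k t
        + ∑ k ∈ Finset.univ.filter (fun k => ¬ 0 < x k), sl k t = ∑ k, sl k t :=
      Finset.sum_filter_add_sum_filter_not _ _ _
    have htotal : ∑ k, sl k t < ∑ k, c k * d k := by
      have h1 : ∑ k ∈ Pset, sl k t ≤ L + 1 := hE1t
      rw [hPset] at h1
      linarith
    -- compare F values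
    have hdiff : F (x + t • d) - F x
        = (∑ k, (Φ (x k + t * d k) - Φ (x k))) - t * ∑ k, c k * d k := by
      simp only [hFdef]
      rw [← Finset.sum_sub_distrib, Finset.mul_sum, ← Finset.sum_sub_distrib]
      apply Finset.sum_congr rfl
      intro k _
      simp only [PiLp.add_apply, PiLp.smul_apply, smul_eq_mul]
      ring
    have hsum_eq : ∑ k, (Φ (x k + t * d k) - Φ (x k)) = t * ∑ k, sl k t := by
      rw [Finset.mul_sum]
      apply Finset.sum_congr rfl
      intro k _
      rw [hsldef]
      simp only
      field_simp
    have hneg : F (x + t • d) < F x := by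
      have h2 : t * ∑ k, sl k t < t * ∑ k, c k * d k :=
        (mul_lt_mul_iff_right₀ ht0').mpr htotal
      rw [← sub_neg]
      rw [hdiff, hsum_eq]
      linarith
    -- but x + t • d lies in C
    have hmemC : x + t • d ∈ C := by
      constructor
      · intro k
        have h1 : (x + t • d) k = x k + t * (p k - x k) := by
          simp [hdk k]
        rw [h1]
        have := hxC.1 k
        nlinarith [ (hp k).le ]
      · have heq : x + t • d - p = (1 - t) • (x - p) := by
          rw [hddef]
          module
        show (x + t • d) - p ∈ D₀
        rw [heq]
        exact D₀.smul_mem _ hxC.2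
    exact absurd (hxmin _ hmemC) (not_le.mpr hneg)
  
  -- first-order condition
  have horth : (WithLp.toLp 2 (fun k => Real.log (θ (x k)) - Real.log (θ (q k))) : EuclideanSpace ℝ (Fin n)) ∈ D₀ᗮ := by
    refine (Submodule.mem_orthogonal D₀ _).mpr ?_
    intro u hu
    have hφeq : ∀ t : ℝ, F (x + t • u) = ∑ k, (Φ (x k + t * u k) - c k * (x k + t * u k)) := by
      intro t
      simp only [hFdef]
      apply Finset.sum_congr rfl
      intro k _
      simp [PiLp.add_apply, PiLp.smul_apply, smul_eq_mul]
    have hder : HasDerivAt (fun t : ℝ => F (x + t • u))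
        (∑ k, (Real.log (θ (x k)) * u k - c k * u k)) 0 := by
      have h1 : HasDerivAt (fun t : ℝ => ∑ k, (Φ (x k + t * u k) - c k * (x k + t * u k)))
          (∑ k, (Real.log (θ (x k)) * u k - c k * u k)) 0 := by
        apply HasDerivAt.fun_sum
        intro k _
        have hb : HasDerivAt (fun t : ℝ => x k + t * u k) (u k) 0 := by
          simpa using ((hasDerivAt_id (0:ℝ)).mul_const (u k)).const_add (x k)
        have hΦk : HasDerivAt (fun t : ℝ => Φ (x k + t * u k)) (Real.log (θ (x k)) * u k) 0 := by
          have h2 := HasDerivAt.comp (0:ℝ)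
            (show HasDerivAt Φ (Real.log (θ (x k))) ((fun t : ℝ => x k + t * u k) 0) by
              simpa using hPhideriv (x k) (hxpos k)) hb
          exact h2
        exact hΦk.sub (hb.const_mul (c k))
      exact h1.congr_of_eventuallyEq (Filter.Eventually.of_forall (fun t => (hφeq t)))
    have hloc : IsLocalMin (fun t : ℝ => F (x + t • u)) 0 := by
      have hev : ∀ᶠ t : ℝ in 𝓝 0, ∀ k, 0 < x k + t * u k := by
        rw [eventually_all]
        intro k
        have hcont : Tendsto (fun t : ℝ => x k + t * u k) (𝓝 0) (𝓝 (x k + 0 * u k)) :=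
          ((continuous_const.add (continuous_id.mul continuous_const)).tendsto 0)
        rw [zero_mul, add_zero] at hcont
        exact hcont.eventually (eventually_gt_nhds (hxpos k))
      filter_upwards [hev] with t ht
      have hmem : x + t • u ∈ C := by
        constructor
        · intro k
          have h3 : (x + t • u) k = x k + t * u k := by simp
          rw [h3]; exact (ht k).le
        · show (x + t • u) - p ∈ D₀
          have h4 : x + t • u - p = (x - p) + t • u := by abel
          rw [h4]
          exact D₀.add_mem hxC.2 (D₀.smul_mem t hu)
      have h0 : x + (0:ℝ) • u = x := by simp
      simpa [h0] using hxmin _ hmem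
    have hzero := hloc.hasDerivAt_eq_zero hder
    simp only [PiLp.inner_apply, RCLike.inner_apply, conj_trivial]
    rw [← hzero]
    apply Finset.sum_congr rfl
    intro k _
    simp only [hcdef]
    ring
  refine ⟨x, ⟨hxpos, hxC.2, horth⟩, ?_⟩
  -- uniqueness
  rintro y ⟨hypos, hyD, hyorth⟩
  have hu : y - x ∈ D₀ := by
    have := D₀.sub_mem hyD hxC.2
    simpa using this
  have hw : (WithLp.toLp 2 (fun k => Real.log (θ (y k)) - Real.log (θ (x k))) : EuclideanSpace ℝ (Fin n)) ∈ D₀ᗮ := by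
    have := D₀ᗮ.sub_mem hyorth horth
    convert this using 1
    ext k
    simp only [PiLp.sub_apply, PiLp.toLp_apply]
    ring
  have hinner : ⟪y - x, (WithLp.toLp 2 (fun k => Real.log (θ (y k)) - Real.log (θ (x k))) : EuclideanSpace ℝ (Fin n))⟫ = 0 :=
    Submodule.inner_right_of_mem_orthogonal hu hw
  have hsum : ∑ k, (y k - x k) * (Real.log (θ (y k)) - Real.log (θ (x k))) = 0 := by
    rw [← hinner]
    simp [PiLp.inner_apply, RCLike.inner_apply, conj_trivial]
    exact Finset.sum_congr rfl fun i _ => mul_comm _ _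
  have hterm : ∀ k : Fin n, 0 ≤ (y k - x k) * (Real.log (θ (y k)) - Real.log (θ (x k))) := by
    intro k
    rcases lt_trichotomy (y k) (x k) with h | h | h
    · have : Real.log (θ (y k)) < Real.log (θ (x k)) :=
        Real.log_lt_log (stmt8_pos hθ0 hθmono _ (hypos k)) (hθmono (hypos k).le (hxpos k).le h)
      nlinarith
    · simp [h]
    · have : Real.log (θ (x k)) < Real.log (θ (y k)) :=
        Real.log_lt_log (stmt8_pos hθ0 hθmono _ (hxpos k)) (hθmono (hxpos k).le (hypos k).le h)
      nlinarith
  have hzero : ∀ k : Fin n, (y k - x k) * (Real.log (θ (y k)) - Real.log (θ (x k))) = 0 := by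
    intro k
    have := (Finset.sum_eq_zero_iff_of_nonneg (fun k _ => hterm k)).mp hsum k (Finset.mem_univ k)
    exact this
  ext k
  have hk := hzero k
  rcases mul_eq_zero.mp hk with h | h
  · linarith [sub_eq_zero.mp h]
  · have heq : Real.log (θ (y k)) = Real.log (θ (x k)) := by linarith [sub_eq_zero.mp h]
    by_contra hne
    rcases lt_or_gt_of_ne hne with hlt | hlt
    · have : Real.log (θ (y k)) < Real.log (θ (x k)) :=
        Real.log_lt_log (stmt8_pos hθ0 hθmono _ (hypos k)) (hθmono (hypos k).le (hxpos k).le hlt)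
      linarith
    · have : Real.log (θ (x k)) < Real.log (θ (y k)) :=
        Real.log_lt_log (stmt8_pos hθ0 hθmono _ (hxpos k)) (hθmono (hxpos k).le (hypos k).le hlt)
      linarith
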